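/- Consider nonadaptive group testing under a model where only defects matter, with a fixed testing matrix X ∈ {0,1}^{N×T}, the genie construction of 𝓛 and 𝒦, an estimator K̂ = K̂(Y_1,…,Y_T), and error probability ε = P(K̂ ≠ 𝒦). Then (1 − ε) · log₂ C(N−ℓ, K−ℓ) ≤ 1 + Σ_{t=1}^{T} I( X_{𝒦∖𝓛,t} : Y_t ∣ X_{𝓛,t} ), where C(n,k) denotes the binomial coefficient. -/

import Mathlib

open Finset Real
open scoped Classical
set_option maxHeartbeats 1000000

noncomputable section

/-- The probability of an event `E` under a pmf `μ` on a finite sample space. -/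
def prb {Ω : Type*} [Fintype Ω] (μ : Ω → ℝ) (E : Ω → Prop) : ℝ :=
  ∑ ω, if E ω then μ ω else 0

/-- `μ` is a probability mass function. -/
def IsPmf {Ω : Type*} [Fintype Ω] (μ : Ω → ℝ) : Prop :=
  (∀ ω, 0 ≤ μ ω) ∧ ∑ ω, μ ω = 1

/-- The conditional pmf of `μ` given the event `E`. -/
def condPmf {Ω : Type*} [Fintype Ω] (μ : Ω → ℝ) (E : Ω → Prop) : Ω → ℝ :=
  fun ω => (if E ω then μ ω else 0) / prb μ E

/-- Shannon entropy (base-2 logarithms) of a probability mass function on a finite set. -/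
def entPmf {α : Type*} [Fintype α] (p : α → ℝ) : ℝ :=
  - ∑ a : α, p a * Real.logb 2 (p a)

/-- Shannon entropy (base-2) of the random variable `X` under the pmf `μ`. -/
def ent {Ω α : Type*} [Fintype Ω] [Fintype α] (μ : Ω → ℝ) (X : Ω → α) : ℝ :=
  - ∑ a : α, prb μ (fun ω => X ω = a) * Real.logb 2 (prb μ (fun ω => X ω = a))

/-- Conditional Shannon entropy `H(X ∣ Z) = Σ_z P(Z = z) · H(X ∣ Z = z)`. -/
def condEnt {Ω α γ : Type*} [Fintype Ω] [Fintype α] (μ : Ω → ℝ) (X : Ω → α) (Z : Ω → γ) : ℝ :=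
  ∑ z ∈ Finset.univ.image Z,
    prb μ (fun ω => Z ω = z) * ent (condPmf μ (fun ω => Z ω = z)) X

/-- Mutual information `I(X : Y) = H(X) + H(Y) − H(X,Y)` (base-2). -/
def mutInfo {Ω α β : Type*} [Fintype Ω] [Fintype α] [Fintype β]
    (μ : Ω → ℝ) (X : Ω → α) (Y : Ω → β) : ℝ :=
  ent μ X + ent μ Y - ent μ (fun ω => (X ω, Y ω))

/-- Conditional mutual information `I(X : Y ∣ Z) = Σ_z P(Z = z) · I(X : Y ∣ Z = z)`. -/
def condMutInfo {Ω α β γ : Type*} [Fintype Ω] [Fintype α] [Fintype β]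
    (μ : Ω → ℝ) (X : Ω → α) (Y : Ω → β) (Z : Ω → γ) : ℝ :=
  ∑ z ∈ Finset.univ.image Z,
    prb μ (fun ω => Z ω = z) * mutInfo (condPmf μ (fun ω => Z ω = z)) X Y

/-- The `K`-element subsets of `{1, …, N}`. -/
abbrev KSets (N K : ℕ) := {S : Finset (Fin N) // S.card = K}

/-- The outcomes of the tests before test `t`. -/
def prevOut {T : ℕ} {Y : Type*} (y : Fin T → Y) (t : Fin T) : Fin t.val → Y :=
  fun s => y ⟨s.val, s.isLt.trans t.isLt⟩

/-- `numDef x S y t` is `k_t`: the number of defective items (members of `S`) in the pool of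
test `t`, when the adaptive strategy `x` is used and the test outcomes are `y`. -/
def numDef {N T : ℕ} {Y : Type*} (x : (t : Fin T) → (Fin t.val → Y) → Fin N → Bool)
    (S : Finset (Fin N)) (y : Fin T → Y) (t : Fin T) : ℕ :=
  (S.filter (fun i => x t (prevOut y t) i = true)).card

/-- The joint pmf of the defective set `𝒦` (uniform over `K`-subsets of `{1,…,N}`) and the
test outcomes `Y_1, …, Y_T` of the adaptive strategy `x`, in the model where only defects
matter: conditionally on `𝒦` and the previous outcomes, `Y_t` has distribution `ν (k_t)`. -/
def gtPmf (N K T : ℕ) (Y : Type*) [Fintype Y] (ν : ℕ → Y → ℝ)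
    (x : (t : Fin T) → (Fin t.val → Y) → Fin N → Bool) :
    KSets N K × (Fin T → Y) → ℝ :=
  fun ω => (1 / (N.choose K : ℝ)) * ∏ t : Fin T, ν (numDef x ω.1.val ω.2 t) (ω.2 t)

/-- The joint pmf of the genie construction: `𝓛` uniform over `ℓ`-subsets of `{1,…,N}`;
conditionally on `𝓛`, the defective set `𝒦` uniform over the `K`-subsets containing `𝓛`;
and the test outcomes of the adaptive strategy `x`, in the model where only defects matter. -/
def geniePmf (N K L T : ℕ) (Y : Type*) [Fintype Y] (ν : ℕ → Y → ℝ)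
    (x : (t : Fin T) → (Fin t.val → Y) → Fin N → Bool) :
    KSets N L × KSets N K × (Fin T → Y) → ℝ :=
  fun ω =>
    (if ω.1.val ⊆ ω.2.1.val then
      (1 / (N.choose L : ℝ)) * (1 / ((N - L).choose (K - L) : ℝ))
    else 0) * ∏ t : Fin T, ν (numDef x ω.2.1.val ω.2.2 t) (ω.2.2 t)

/-- `XS S v` records the pair `(S, (v_i)_{i ∈ S})`: the set `S` together with the
restriction of `v` to `S`. -/
def XS {N : ℕ} (S : Finset (Fin N)) (v : Fin N → Bool) :
    Finset (Fin N) × (Fin N → Option Bool) :=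
  (S, fun i => if i ∈ S then some (v i) else none)

end

/-- The joint pmf of the genie construction (`𝓛` uniform over `ℓ`-subsets of `{1,…,N}` and,
conditionally on `𝓛`, `𝒦` uniform over the `K`-subsets containing `𝓛`) together with the test
outcomes for *nonadaptive* group testing with fixed testing matrix `X ∈ {0,1}^{N×T}`, in the
model where only defects matter: given `𝒦`, the outcomes are independent with `Y_t ∼ ν (k_t)`
where `k_t = |{i ∈ 𝒦 : X_{i,t} = 1}|`. -/
noncomputable def naGeniePmf (N K L T : ℕ) (Y : Type*) [Fintype Y] (ν : ℕ → Y → ℝ)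
    (X : Fin N → Fin T → Bool) :
    KSets N L × KSets N K × (Fin T → Y) → ℝ :=
  fun ω =>
    (if ω.1.val ⊆ ω.2.1.val then
      (1 / (N.choose L : ℝ)) * (1 / ((N - L).choose (K - L) : ℝ))
    else 0) * ∏ t : Fin T, ν ((ω.2.1.val.filter (fun i => X i t = true)).card) (ω.2.2 t)


/-! ### Auxiliary library -/

noncomputable section GTLib

open Finset

variable {Ω : Type*} [Fintype Ω]

lemma prb_nonneg {μ : Ω → ℝ} (hμ : ∀ ω, 0 ≤ μ ω) (E : Ω → Prop) : 0 ≤ prb μ E := by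
  refine Finset.sum_nonneg fun ω _ => ?_
  by_cases h : E ω <;> simp [h, hμ ω]

lemma prb_mono {μ : Ω → ℝ} (hμ : ∀ ω, 0 ≤ μ ω) {E F : Ω → Prop}
    (h : ∀ ω, E ω → F ω) : prb μ E ≤ prb μ F := by
  refine Finset.sum_le_sum fun ω _ => ?_
  by_cases hE : E ω
  · simp [hE, h ω hE]
  · by_cases hF : F ω <;> simp [hE, hF, hμ ω]

lemma prb_congr {μ : Ω → ℝ} {E F : Ω → Prop} (h : ∀ ω, E ω ↔ F ω) :
    prb μ E = prb μ F :=
  Finset.sum_congr rfl fun ω _ => if_congr (h ω) rfl rfl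

lemma prb_congr_ae {μ : Ω → ℝ} {E F : Ω → Prop} (h : ∀ ω, μ ω ≠ 0 → (E ω ↔ F ω)) :
    prb μ E = prb μ F := by
  refine Finset.sum_congr rfl fun ω _ => ?_
  by_cases hω : μ ω = 0
  · simp [hω]
  · exact if_congr (h ω hω) rfl rfl

lemma prb_true {μ : Ω → ℝ} (hμ : IsPmf μ) : prb μ (fun _ => True) = 1 := by
  simpa [prb] using hμ.2

lemma prb_false {μ : Ω → ℝ} : prb μ (fun _ => False) = 0 := by simp [prb]

lemma prb_eq_zero_of {μ : Ω → ℝ} {E : Ω → Prop} (h : ∀ ω, E ω → μ ω = 0) :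
    prb μ E = 0 := by
  refine Finset.sum_eq_zero fun ω _ => ?_
  by_cases hE : E ω
  · simp [hE, h ω hE]
  · simp [hE]

lemma exists_of_prb_ne_zero {μ : Ω → ℝ} {E : Ω → Prop} (h : prb μ E ≠ 0) :
    ∃ ω, E ω ∧ μ ω ≠ 0 := by
  by_contra hc
  push_neg at hc
  exact h (prb_eq_zero_of fun ω hE => by
    by_contra hne; exact hne (hc ω hE) |>.elim)

lemma mu_eq_zero_of_prb_eq_zero {μ : Ω → ℝ} {E : Ω → Prop} (hμ : ∀ ω, 0 ≤ μ ω)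
    (h : prb μ E = 0) : ∀ ω, E ω → μ ω = 0 := by
  intro ω hE
  have hnn : ∀ x ∈ (univ : Finset Ω), 0 ≤ (fun ω => if E ω then μ ω else 0) x := by
    intro x _; by_cases hx : E x <;> simp [hx, hμ x]
  have := (Finset.sum_eq_zero_iff_of_nonneg hnn).1 h ω (mem_univ ω)
  simpa [hE] using this

lemma prb_compl {μ : Ω → ℝ} (hμ : IsPmf μ) (E : Ω → Prop) :
    prb μ (fun ω => ¬ E ω) = 1 - prb μ E := by
  have : prb μ E + prb μ (fun ω => ¬ E ω) = 1 := by
    rw [← hμ.2, prb, prb, ← Finset.sum_add_distrib]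
    refine Finset.sum_congr rfl fun ω _ => ?_
    by_cases h : E ω <;> simp [h]
  linarith

lemma prb_fiber_sum {γ : Type*} (μ : Ω → ℝ) (Z : Ω → γ) (F : Ω → Prop) :
    ∑ z ∈ univ.image Z, prb μ (fun ω => Z ω = z ∧ F ω) = prb μ F := by
  unfold prb
  rw [Finset.sum_comm]
  refine Finset.sum_congr rfl fun ω _ => ?_
  rw [Finset.sum_eq_single (Z ω)]
  · by_cases h : F ω <;> simp [h]
  · intro z _ hz
    rw [if_neg]; rintro ⟨h1, _⟩; exact hz h1.symm
  · intro h; exact absurd (Finset.mem_image_of_mem Z (mem_univ ω)) h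

lemma prb_comp_sum {α : Type*} [Fintype α] (μ : Ω → ℝ) (Xv : Ω → α) (F : Ω → Prop) :
    ∑ a : α, prb μ (fun ω => Xv ω = a ∧ F ω) = prb μ F := by
  unfold prb
  rw [Finset.sum_comm]
  refine Finset.sum_congr rfl fun ω _ => ?_
  rw [Finset.sum_eq_single (Xv ω)]
  · by_cases h : F ω <;> simp [h]
  · intro a _ ha
    rw [if_neg]; rintro ⟨h1, _⟩; exact ha h1.symm
  · intro h; exact absurd (mem_univ _) h


lemma condPmf_nonneg {μ : Ω → ℝ} (hμ : ∀ ω, 0 ≤ μ ω) (E : Ω → Prop) :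
    ∀ ω, 0 ≤ condPmf μ E ω := by
  intro ω
  unfold condPmf
  refine div_nonneg ?_ (prb_nonneg hμ E)
  by_cases h : E ω <;> simp [h, hμ ω]

lemma prb_condPmf (μ : Ω → ℝ) (E F : Ω → Prop) :
    prb (condPmf μ E) F = prb μ (fun ω => E ω ∧ F ω) / prb μ E := by
  rw [prb, prb, Finset.sum_div]
  refine Finset.sum_congr rfl fun ω _ => ?_
  unfold condPmf
  by_cases hF : F ω
  · by_cases hE : E ω <;> simp [hF, hE]
  · simp [hF]

lemma prb_mul_condPmf {μ : Ω → ℝ} (hμ : ∀ ω, 0 ≤ μ ω) (E F : Ω → Prop) :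
    prb μ E * prb (condPmf μ E) F = prb μ (fun ω => E ω ∧ F ω) := by
  rw [prb_condPmf]
  by_cases h : prb μ E = 0
  · have h2 : prb μ (fun ω => E ω ∧ F ω) = 0 :=
      prb_eq_zero_of fun ω hEF => mu_eq_zero_of_prb_eq_zero hμ h ω hEF.1
    simp [h, h2]
  · rw [mul_comm, div_mul_cancel₀ _ h]

lemma condPmf_isPmf {μ : Ω → ℝ} (hμ : IsPmf μ) {E : Ω → Prop} (hE : prb μ E ≠ 0) :
    IsPmf (condPmf μ E) := by
  constructor
  · exact condPmf_nonneg hμ.1 E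
  · unfold condPmf
    rw [← Finset.sum_div]
    exact div_self hE

lemma condPmf_congr {μ : Ω → ℝ} {E F : Ω → Prop} (h : ∀ ω, E ω ↔ F ω) :
    condPmf μ E = condPmf μ F := by
  funext ω
  unfold condPmf
  rw [if_congr (h ω) rfl rfl, prb_congr h]

lemma condPmf_condPmf {μ : Ω → ℝ} (hμ : ∀ ω, 0 ≤ μ ω) (E F : Ω → Prop) :
    condPmf (condPmf μ E) F = condPmf μ (fun ω => E ω ∧ F ω) := by
  funext ω
  rw [show condPmf (condPmf μ E) F ω
      = (if F ω then condPmf μ E ω else 0) / prb (condPmf μ E) F from rfl,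
    prb_condPmf]
  unfold condPmf
  by_cases hE : prb μ E = 0
  · have hEF : prb μ (fun ω => E ω ∧ F ω) = 0 :=
      prb_eq_zero_of fun ω h => mu_eq_zero_of_prb_eq_zero hμ hE ω h.1
    have hz : ∀ ω, E ω → μ ω = 0 := mu_eq_zero_of_prb_eq_zero hμ hE
    by_cases hFω : F ω
    · by_cases hEω : E ω <;> simp [hFω, hEω, hE, hEF, hz ω]
    · simp [hFω, hEF]
  · by_cases hEF : prb μ (fun ω => E ω ∧ F ω) = 0
    · have hz : ∀ ω', E ω' ∧ F ω' → μ ω' = 0 := mu_eq_zero_of_prb_eq_zero hμ hEF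
      by_cases hFω : F ω
      · by_cases hEω : E ω
        · simp [hFω, hEω, hEF, hz ω ⟨hEω, hFω⟩]
        · simp [hFω, hEω, hEF]
      · simp [hFω, hEF]
    · by_cases hFω : F ω
      · by_cases hEω : E ω
        · rw [if_pos hFω, if_pos hEω, if_pos ⟨hEω, hFω⟩]
          field_simp
        · rw [if_pos hFω, if_neg hEω, if_neg (by rintro ⟨h1,_⟩; exact hEω h1)]
          simp
      · rw [if_neg hFω, if_neg (by rintro ⟨_,h2⟩; exact hFω h2)]
        simp

lemma condPmf_support {μ : Ω → ℝ} {E : Ω → Prop} {ω : Ω} (h : condPmf μ E ω ≠ 0) :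
    E ω ∧ μ ω ≠ 0 := by
  unfold condPmf at h
  by_cases hE : E ω
  · refine ⟨hE, ?_⟩
    intro h0
    simp [hE, h0] at h
  · simp [hE] at h

lemma ent_of_prb_zero {α : Type*} [Fintype α] {μ : Ω → ℝ} {E : Ω → Prop}
    (h : prb μ E = 0) (Xv : Ω → α) : ent (condPmf μ E) Xv = 0 := by
  have hc : condPmf μ E = fun _ => 0 := by
    funext ω; unfold condPmf; rw [h, div_zero]
  have hp : ∀ a, prb (condPmf μ E) (fun ω => Xv ω = a) = 0 := by
    intro a; rw [hc]; exact prb_eq_zero_of fun _ _ => rfl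
  unfold ent
  simp [hp]


lemma condEnt_def' {α γ : Type*} [Fintype α] (μ : Ω → ℝ) (Xv : Ω → α) (Z : Ω → γ) :
    condEnt μ Xv Z = ∑ z ∈ univ.image Z,
      prb μ (fun ω => Z ω = z) * ent (condPmf μ (fun ω => Z ω = z)) Xv := rfl

/-! ### Gibbs inequality and entropy lemmas -/

lemma gibbs {α : Type*} [Fintype α] {p q : α → ℝ} (hp : IsPmf p)
    (hq0 : ∀ a, 0 ≤ q a) (hq1 : ∑ a, q a ≤ 1)
    (hpq : ∀ a, p a ≠ 0 → q a ≠ 0) :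
    entPmf p ≤ - ∑ a, p a * Real.logb 2 (q a) := by
  have hlog2 : (0:ℝ) < Real.log 2 := Real.log_pos (by norm_num)
  have key : ∀ a : α, p a * Real.logb 2 (q a) - p a * Real.logb 2 (p a)
      ≤ (q a - p a) / Real.log 2 := by
    intro a
    by_cases hpa : p a = 0
    · simp only [hpa, zero_mul, sub_zero, sub_self]
      exact div_nonneg (hq0 a) hlog2.le
    · have hppos : 0 < p a := lt_of_le_of_ne (hp.1 a) (Ne.symm hpa)
      have hqpos : 0 < q a := lt_of_le_of_ne (hq0 a) (Ne.symm (hpq a hpa))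
      have h1 : Real.log (q a / p a) ≤ q a / p a - 1 :=
        Real.log_le_sub_one_of_pos (by positivity)
      have h2 : p a * Real.log (q a / p a) ≤ q a - p a := by
        calc p a * Real.log (q a / p a) ≤ p a * (q a / p a - 1) :=
              mul_le_mul_of_nonneg_left h1 hppos.le
          _ = q a - p a := by field_simp
      have h3 : p a * Real.logb 2 (q a) - p a * Real.logb 2 (p a)
          = (p a * Real.log (q a / p a)) / Real.log 2 := by
        rw [Real.log_div (hpq a hpa) hpa, Real.logb, Real.logb]
        ring
      rw [h3]
      gcongr
  have hsum := Finset.sum_le_sum fun a (_ : a ∈ univ) => key a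
  rw [Finset.sum_sub_distrib] at hsum
  have h4 : ∑ a, (q a - p a) / Real.log 2 = (∑ a, q a - 1) / Real.log 2 := by
    rw [← Finset.sum_div, Finset.sum_sub_distrib, hp.2]
  have h5 : (∑ a, q a - 1) / Real.log 2 ≤ 0 :=
    div_nonpos_iff.2 (Or.inr ⟨by linarith, hlog2.le⟩)
  rw [h4] at hsum
  unfold entPmf
  linarith

/-! ### Product measures on `Fin T → Y` -/

section Pi
variable {T : ℕ} {Y : Type*} [Fintype Y]

lemma sum_pi_prod (q : Fin T → Y → ℝ) :
    ∑ y : Fin T → Y, ∏ t, q t (y t) = ∏ t, ∑ c, q t c := by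
  rw [Finset.prod_univ_sum]
  rw [Fintype.piFinset_univ]

lemma marg_pi (q : Fin T → Y → ℝ) (hq : ∀ s, ∑ c, q s c = 1) (t : Fin T) (c : Y) :
    ∑ y : Fin T → Y, (if y t = c then ∏ s, q s (y s) else 0) = q t c := by
  have hrw : ∀ y : Fin T → Y, (if y t = c then ∏ s, q s (y s) else 0)
      = ∏ s, (fun s d => if s = t then (if d = c then q s d else 0) else q s d) s (y s) := by
    intro y
    by_cases h : y t = c
    · rw [if_pos h]
      refine Finset.prod_congr rfl fun s _ => ?_
      by_cases hs : s = t
      · subst hs; simp [h]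
      · simp [hs]
    · rw [if_neg h]
      symm
      apply Finset.prod_eq_zero (Finset.mem_univ t)
      simp [h]
  calc ∑ y : Fin T → Y, (if y t = c then ∏ s, q s (y s) else 0)
      = ∑ y : Fin T → Y, ∏ s,
          (fun s d => if s = t then (if d = c then q s d else 0) else q s d) s (y s) :=
        Finset.sum_congr rfl fun y _ => hrw y
    _ = ∏ s, ∑ d, (fun s d => if s = t then (if d = c then q s d else 0) else q s d) s d :=
        sum_pi_prod (fun s d => if s = t then (if d = c then q s d else 0) else q s d)
    _ = q t c := by
        rw [Finset.prod_eq_single t]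
        · simp
        · intro s _ hs
          simp only [if_neg hs]
          exact hq s
        · intro h; exact absurd (Finset.mem_univ t) h

lemma entPmf_prod (q : Fin T → Y → ℝ) (hq : ∀ t, IsPmf (q t)) :
    entPmf (fun y : Fin T → Y => ∏ t, q t (y t)) = ∑ t, entPmf (q t) := by
  unfold entPmf
  have step : ∀ y : Fin T → Y,
      (∏ t, q t (y t)) * Real.logb 2 (∏ t, q t (y t))
      = ∑ t, (∏ s, q s (y s)) * Real.logb 2 (q t (y t)) := by
    intro y
    by_cases hz : ∀ s, q s (y s) ≠ 0
    · rw [Real.logb_prod _ _ (fun s _ => hz s), Finset.mul_sum]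
    · push_neg at hz
      obtain ⟨s, hs⟩ := hz
      have hprod : ∏ u, q u (y u) = 0 := Finset.prod_eq_zero (Finset.mem_univ s) hs
      rw [hprod]
      simp
  have e1 : ∑ y : Fin T → Y, (∏ t, q t (y t)) * Real.logb 2 (∏ t, q t (y t))
      = ∑ t, ∑ y : Fin T → Y, (∏ s, q s (y s)) * Real.logb 2 (q t (y t)) := by
    rw [Finset.sum_congr rfl fun y _ => step y, Finset.sum_comm]
  have e2 : ∀ t : Fin T, ∑ y : Fin T → Y, (∏ s, q s (y s)) * Real.logb 2 (q t (y t))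
      = ∑ c, q t c * Real.logb 2 (q t c) := by
    intro t
    have hy : ∀ y : Fin T → Y, (∏ s, q s (y s)) * Real.logb 2 (q t (y t))
        = ∑ c, (if y t = c then (∏ s, q s (y s)) else 0) * Real.logb 2 (q t c) := by
      intro y
      rw [Finset.sum_eq_single (y t)]
      · rw [if_pos rfl]
      · intro c _ hc
        rw [if_neg (fun h => hc h.symm), zero_mul]
      · intro h; exact absurd (Finset.mem_univ (y t)) h
    rw [Finset.sum_congr rfl fun y _ => hy y, Finset.sum_comm]
    refine Finset.sum_congr rfl fun c _ => ?_
    rw [← Finset.sum_mul, marg_pi q (fun s => (hq s).2) t c]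
  rw [e1, ← Finset.sum_neg_distrib]
  exact Finset.sum_congr rfl fun t _ => by rw [e2 t]

end Pi

/-! ### Chain rule -/

lemma chain_rule {α γ : Type*} [Fintype α] [Fintype γ] {μ : Ω → ℝ} (hμ : ∀ ω, 0 ≤ μ ω)
    (Xv : Ω → α) (Z : Ω → γ) :
    ent μ (fun ω => (Xv ω, Z ω)) = ent μ Z + condEnt μ Xv Z := by
  have hsum : ∀ z, ∑ a, prb μ (fun ω => Xv ω = a ∧ Z ω = z) = prb μ (fun ω => Z ω = z) :=
    fun z => prb_comp_sum μ Xv _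
  have hPnn : ∀ a z, (0:ℝ) ≤ prb μ (fun ω => Xv ω = a ∧ Z ω = z) :=
    fun a z => prb_nonneg hμ _
  have hle : ∀ a z, prb μ (fun ω => Xv ω = a ∧ Z ω = z) ≤ prb μ (fun ω => Z ω = z) :=
    fun a z => prb_mono hμ (fun ω h => h.2)
  have key : ∀ z, prb μ (fun ω => Z ω = z) * ent (condPmf μ (fun ω => Z ω = z)) Xv
      = (- ∑ a, prb μ (fun ω => Xv ω = a ∧ Z ω = z)
            * Real.logb 2 (prb μ (fun ω => Xv ω = a ∧ Z ω = z)))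
        + prb μ (fun ω => Z ω = z) * Real.logb 2 (prb μ (fun ω => Z ω = z)) := by
    intro z
    by_cases hz : prb μ (fun ω => Z ω = z) = 0
    · have hPa : ∀ a, prb μ (fun ω => Xv ω = a ∧ Z ω = z) = 0 :=
        fun a => le_antisymm (hz ▸ hle a z) (hPnn a z)
      simp [hz, hPa]
    · have hent : ent (condPmf μ (fun ω => Z ω = z)) Xv
          = - ∑ a, (prb μ (fun ω => Xv ω = a ∧ Z ω = z) / prb μ (fun ω => Z ω = z))
              * Real.logb 2 (prb μ (fun ω => Xv ω = a ∧ Z ω = z)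
                  / prb μ (fun ω => Z ω = z)) := by
        unfold ent
        congr 1
        refine Finset.sum_congr rfl fun a _ => ?_
        rw [prb_condPmf, prb_congr (fun ω => @and_comm (Z ω = z) (Xv ω = a))]
      rw [hent, mul_neg, Finset.mul_sum]
      have hterm : ∀ a, prb μ (fun ω => Z ω = z)
            * ((prb μ (fun ω => Xv ω = a ∧ Z ω = z) / prb μ (fun ω => Z ω = z))
              * Real.logb 2 (prb μ (fun ω => Xv ω = a ∧ Z ω = z)
                  / prb μ (fun ω => Z ω = z)))
          = prb μ (fun ω => Xv ω = a ∧ Z ω = z)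
              * Real.logb 2 (prb μ (fun ω => Xv ω = a ∧ Z ω = z))
            - prb μ (fun ω => Xv ω = a ∧ Z ω = z)
              * Real.logb 2 (prb μ (fun ω => Z ω = z)) := by
        intro a
        by_cases hpa : prb μ (fun ω => Xv ω = a ∧ Z ω = z) = 0
        · simp [hpa]
        · rw [Real.logb_div hpa hz]
          field_simp
      rw [Finset.sum_congr rfl fun a _ => hterm a, Finset.sum_sub_distrib,
        ← Finset.sum_mul, hsum z]
      ring
  have himg : ∀ z, z ∉ univ.image Z → prb μ (fun ω => Z ω = z) = 0 := by
    intro z hz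
    exact prb_eq_zero_of fun ω hω =>
      absurd (hω ▸ Finset.mem_image_of_mem Z (mem_univ ω)) hz
  have e3 : ent μ Z = - ∑ z ∈ univ.image Z,
      prb μ (fun ω => Z ω = z) * Real.logb 2 (prb μ (fun ω => Z ω = z)) := by
    unfold ent
    congr 1
    symm
    apply Finset.sum_subset (Finset.subset_univ _)
    intro z _ hz
    simp [himg z hz]
  have e4 : ent μ (fun ω => (Xv ω, Z ω)) = - ∑ z ∈ univ.image Z, ∑ a,
      prb μ (fun ω => Xv ω = a ∧ Z ω = z)
        * Real.logb 2 (prb μ (fun ω => Xv ω = a ∧ Z ω = z)) := by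
    have ev : ∀ (a : α) (z : γ), prb μ (fun ω => (Xv ω, Z ω) = (a, z))
        = prb μ (fun ω => Xv ω = a ∧ Z ω = z) :=
      fun a z => prb_congr fun ω => by simp [Prod.ext_iff]
    unfold ent
    congr 1
    rw [Fintype.sum_prod_type, Finset.sum_comm]
    rw [Finset.sum_congr rfl fun z _ => Finset.sum_congr rfl fun a _ => by rw [ev a z]]
    symm
    apply Finset.sum_subset (Finset.subset_univ _)
    intro z _ hz
    have h0 : ∀ a, prb μ (fun ω => Xv ω = a ∧ Z ω = z) = 0 :=
      fun a => le_antisymm ((himg z hz) ▸ hle a z) (hPnn a z)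
    simp [h0]
  unfold condEnt
  rw [e3, e4, Finset.sum_congr rfl fun z _ => key z, Finset.sum_add_distrib]
  simp only [Finset.sum_neg_distrib]
  ring

lemma ent_pair_comm {α γ : Type*} [Fintype α] [Fintype γ] (μ : Ω → ℝ)
    (Xv : Ω → α) (Z : Ω → γ) :
    ent μ (fun ω => (Xv ω, Z ω)) = ent μ (fun ω => (Z ω, Xv ω)) := by
  unfold ent
  congr 1
  apply Fintype.sum_equiv (Equiv.prodComm α γ)
  intro x
  have h : prb μ (fun ω => (Xv ω, Z ω) = x)
      = prb μ (fun ω => (Z ω, Xv ω) = (Equiv.prodComm α γ) x) := by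
    refine prb_congr fun ω => ?_
    cases x
    simp only [Equiv.prodComm_apply, Prod.swap_prod_mk, Prod.mk.injEq]
    tauto
  rw [h]

lemma ent_congr_ae {α : Type*} [Fintype α] {μ : Ω → ℝ} {Xv Xv' : Ω → α}
    (h : ∀ ω, μ ω ≠ 0 → Xv ω = Xv' ω) : ent μ Xv = ent μ Xv' := by
  unfold ent
  congr 1
  refine Finset.sum_congr rfl fun a _ => ?_
  rw [prb_congr_ae (fun ω hω => by rw [h ω hω])]

/-! ### condEnt as an expectation -/

lemma condEnt_eq_expect {α γ : Type*} [Fintype α] {μ : Ω → ℝ}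
    (hμ : ∀ ω, 0 ≤ μ ω) (Xv : Ω → α) (Z : Ω → γ) (G : γ → ℝ)
    (hG : ∀ z, prb μ (fun ω => Z ω = z) ≠ 0 →
      ent (condPmf μ (fun ω => Z ω = z)) Xv = G z) :
    condEnt μ Xv Z = ∑ ω, μ ω * G (Z ω) := by
  unfold condEnt
  rw [← Finset.sum_fiberwise_of_maps_to
    (fun ω (_ : ω ∈ univ) => Finset.mem_image_of_mem Z (mem_univ ω))
    (fun ω => μ ω * G (Z ω))]
  refine Finset.sum_congr rfl fun z hz => ?_
  by_cases hPz : prb μ (fun ω => Z ω = z) = 0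
  · have h0 : ∀ ω, Z ω = z → μ ω = 0 := mu_eq_zero_of_prb_eq_zero hμ hPz
    rw [hPz, zero_mul]
    symm
    refine Finset.sum_eq_zero fun ω hω => ?_
    rw [h0 ω (by simpa using (Finset.mem_filter.1 hω).2), zero_mul]
  · rw [hG z hPz]
    have hc : ∀ ω ∈ univ.filter (fun ω => Z ω = z), μ ω * G (Z ω) = μ ω * G z := by
      intro ω hω
      rw [(Finset.mem_filter.1 hω).2]
    rw [Finset.sum_congr rfl hc, ← Finset.sum_mul]
    congr 1
    rw [Finset.sum_filter]
    rfl

/-! ### Tower property -/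

lemma condEnt_pair {α γ γ' : Type*} [Fintype α] {μ : Ω → ℝ} (hμ : ∀ ω, 0 ≤ μ ω)
    (Xv : Ω → α) (Z : Ω → γ) (Z' : Ω → γ') :
    condEnt μ Xv (fun ω => (Z ω, Z' ω))
      = ∑ z ∈ univ.image Z, prb μ (fun ω => Z ω = z)
          * condEnt (condPmf μ (fun ω => Z ω = z)) Xv Z' := by
  unfold condEnt
  have rhs : ∀ z, prb μ (fun ω => Z ω = z) * ∑ y ∈ univ.image Z',
        prb (condPmf μ (fun ω => Z ω = z)) (fun ω => Z' ω = y)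
          * ent (condPmf (condPmf μ (fun ω => Z ω = z)) (fun ω => Z' ω = y)) Xv
      = ∑ y ∈ univ.image Z', prb μ (fun ω => Z ω = z ∧ Z' ω = y)
          * ent (condPmf μ (fun ω => Z ω = z ∧ Z' ω = y)) Xv := by
    intro z
    rw [Finset.mul_sum]
    refine Finset.sum_congr rfl fun y _ => ?_
    rw [condPmf_condPmf hμ, ← mul_assoc, prb_mul_condPmf hμ]
  rw [Finset.sum_congr rfl fun z _ => rhs z]
  have ev : ∀ (p : γ × γ'), prb μ (fun ω => (Z ω, Z' ω) = p)
      = prb μ (fun ω => Z ω = p.1 ∧ Z' ω = p.2) :=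
    fun p => prb_congr fun ω => by cases p; simp [Prod.ext_iff]
  have evc : ∀ (p : γ × γ'), condPmf μ (fun ω => (Z ω, Z' ω) = p)
      = condPmf μ (fun ω => Z ω = p.1 ∧ Z' ω = p.2) :=
    fun p => condPmf_congr fun ω => by cases p; simp [Prod.ext_iff]
  rw [Finset.sum_congr rfl fun p _ => by rw [ev p, evc p]]
  have hsub : univ.image (fun ω => (Z ω, Z' ω)) ⊆ (univ.image Z) ×ˢ (univ.image Z') := by
    intro p hp
    obtain ⟨ω, _, hω⟩ := Finset.mem_image.1 hp
    rw [← hω]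
    exact Finset.mem_product.2
      ⟨Finset.mem_image_of_mem _ (mem_univ ω), Finset.mem_image_of_mem _ (mem_univ ω)⟩
  have hzero : ∀ p ∈ (univ.image Z) ×ˢ (univ.image Z'),
      p ∉ univ.image (fun ω => (Z ω, Z' ω)) →
      prb μ (fun ω => Z ω = p.1 ∧ Z' ω = p.2)
        * ent (condPmf μ (fun ω => Z ω = p.1 ∧ Z' ω = p.2)) Xv = 0 := by
    intro p _ hp
    have h0 : prb μ (fun ω => Z ω = p.1 ∧ Z' ω = p.2) = 0 := by
      refine prb_eq_zero_of fun ω hω => ?_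
      exact absurd (Finset.mem_image.2 ⟨ω, mem_univ ω, Prod.ext hω.1 hω.2⟩) hp
    rw [h0, zero_mul]
  have key := (Finset.sum_subset hsub hzero).trans (Finset.sum_product _ _ _)
  convert key using 2
  ext p
  simp

/-! ### Relabelling the conditioning variable -/

lemma condMutInfo_comp_inj {α β γ γ' : Type*} [Fintype α] [Fintype β]
    (μ : Ω → ℝ) (Xv : Ω → α) (Yv : Ω → β) (Z : Ω → γ) (h : γ → γ')
    (hinj : Function.Injective h) :
    condMutInfo μ Xv Yv (fun ω => h (Z ω))
      = ∑ z ∈ univ.image Z, prb μ (fun ω => Z ω = z)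
          * mutInfo (condPmf μ (fun ω => Z ω = z)) Xv Yv := by
  unfold condMutInfo
  have himg : univ.image (fun ω => h (Z ω)) = (univ.image Z).image h := by
    rw [Finset.image_image]
    rfl
  rw [himg, Finset.sum_image (fun z _ z' _ e => hinj e)]
  refine Finset.sum_congr rfl fun z _ => ?_
  rw [prb_congr (E := fun ω => h (Z ω) = h z) (F := fun ω => Z ω = z)
        (fun ω => ⟨fun e => hinj e, fun e => congrArg h e⟩),
      condPmf_congr (E := fun ω => h (Z ω) = h z) (F := fun ω => Z ω = z)
        (fun ω => ⟨fun e => hinj e, fun e => congrArg h e⟩)]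

/-! ### Fano-type bound -/

lemma fano_core {β : Type*} [Fintype β] (p : β → ℝ) (hp : IsPmf p)
    (s : Finset β) (hs : ∀ b, p b ≠ 0 → b ∈ s) (vhat : β) :
    entPmf p ≤ 1 + (1 - p vhat) * Real.logb 2 (s.card : ℝ) := by
  have hcard : 0 < s.card := by
    have hex : ∃ b, p b ≠ 0 := by
      by_contra hb
      push_neg at hb
      have h2 := hp.2
      simp [hb] at h2
    obtain ⟨b, hb⟩ := hex
    exact Finset.card_pos.2 ⟨b, hs b hb⟩
  have hM : (1:ℝ) ≤ (s.card : ℝ) := by exact_mod_cast hcard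
  have hMpos : (0:ℝ) < (s.card : ℝ) := lt_of_lt_of_le one_pos hM
  have hq0 : ∀ b, 0 ≤ (if b = vhat then (1:ℝ)/2
      else if b ∈ s then 1/(2*(s.card : ℝ)) else 0) := by
    intro b
    split_ifs <;> positivity
  have hq1 : ∑ b, (if b = vhat then (1:ℝ)/2
      else if b ∈ s then 1/(2*(s.card : ℝ)) else 0) ≤ 1 := by
    have hb : ∀ b, (if b = vhat then (1:ℝ)/2
        else if b ∈ s then 1/(2*(s.card : ℝ)) else 0)
        ≤ (if b = vhat then (1:ℝ)/2 else 0) + (if b ∈ s then 1/(2*(s.card : ℝ)) else 0) := by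
      intro b
      by_cases h1 : b = vhat
      · simp only [if_pos h1]
        have : (0:ℝ) ≤ (if b ∈ s then 1/(2*(s.card : ℝ)) else 0) := by
          split_ifs <;> positivity
        linarith
      · simp only [if_neg h1]
        split_ifs <;> simp
    calc ∑ b, (if b = vhat then (1:ℝ)/2 else if b ∈ s then 1/(2*(s.card : ℝ)) else 0)
        ≤ ∑ b, ((if b = vhat then (1:ℝ)/2 else 0)
            + (if b ∈ s then 1/(2*(s.card : ℝ)) else 0)) :=
          Finset.sum_le_sum fun b _ => hb b
      _ = 1/2 + (s.card : ℝ) * (1/(2*(s.card : ℝ))) := by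
          rw [Finset.sum_add_distrib]
          congr 1
          · simp
          · rw [Finset.sum_ite_mem, Finset.univ_inter, Finset.sum_const,
              nsmul_eq_mul]
      _ = 1 := by field_simp; ring
  have hpq : ∀ b, p b ≠ 0 → (if b = vhat then (1:ℝ)/2
      else if b ∈ s then 1/(2*(s.card : ℝ)) else 0) ≠ 0 := by
    intro b hb
    by_cases h1 : b = vhat
    · simp only [if_pos h1]; norm_num
    · simp only [if_neg h1, if_pos (hs b hb)]
      positivity
  have hgibbs := gibbs hp hq0 hq1 hpq
  refine le_trans hgibbs ?_
  have hlog1 : Real.logb 2 ((1:ℝ)/2) = -1 := by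
    rw [one_div, Real.logb_inv, Real.logb_self_eq_one (by norm_num)]
  have hlog2 : Real.logb 2 (1/(2*(s.card : ℝ))) = -(1 + Real.logb 2 (s.card : ℝ)) := by
    rw [one_div, Real.logb_inv, Real.logb_mul (by norm_num) hMpos.ne',
      Real.logb_self_eq_one (by norm_num)]
  have key : ∀ b, - (p b * Real.logb 2 (if b = vhat then (1:ℝ)/2
        else if b ∈ s then 1/(2*(s.card : ℝ)) else 0))
      ≤ p b * (if b = vhat then 1 else 1 + Real.logb 2 (s.card : ℝ)) := by
    intro b
    by_cases h1 : b = vhat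
    · simp only [if_pos h1, hlog1]
      linarith
    · simp only [if_neg h1]
      by_cases hb : p b = 0
      · simp [hb]
      · rw [if_pos (hs b hb), hlog2]
        exact le_of_eq (by ring)
  calc - ∑ b, p b * Real.logb 2 (if b = vhat then (1:ℝ)/2
          else if b ∈ s then 1/(2*(s.card : ℝ)) else 0)
      = ∑ b, -(p b * Real.logb 2 (if b = vhat then (1:ℝ)/2
          else if b ∈ s then 1/(2*(s.card : ℝ)) else 0)) := by
        rw [Finset.sum_neg_distrib]
    _ ≤ ∑ b, p b * (if b = vhat then 1 else 1 + Real.logb 2 (s.card : ℝ)) :=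
        Finset.sum_le_sum fun b _ => key b
    _ = ∑ b, (p b * (1 + Real.logb 2 (s.card : ℝ)))
          - p vhat * Real.logb 2 (s.card : ℝ) := by
        have hterm : ∀ b, p b * (if b = vhat then 1 else 1 + Real.logb 2 (s.card : ℝ))
            = p b * (1 + Real.logb 2 (s.card : ℝ))
              - (if b = vhat then p b * Real.logb 2 (s.card : ℝ) else 0) := by
          intro b
          split_ifs <;> ring
        rw [Finset.sum_congr rfl fun b _ => hterm b, Finset.sum_sub_distrib]
        congr 1
        simp
    _ = (1 + Real.logb 2 (s.card : ℝ)) - p vhat * Real.logb 2 (s.card : ℝ) := by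
        rw [← Finset.sum_mul, hp.2, one_mul]
    _ = 1 + (1 - p vhat) * Real.logb 2 (s.card : ℝ) := by ring


/-! ### Counting -/

lemma card_supersets {N : ℕ} (K l : ℕ) (hKN : K ≤ N) (hlK : l ≤ K)
    (u : Finset (Fin N)) (hu : u.card = l) :
    (univ.filter (fun v : KSets N K => u ⊆ v.val)).card = (N - l).choose (K - l) := by
  have hdisj : ∀ s : Finset (Fin N), s ∈ Finset.powersetCard (K - l) uᶜ → Disjoint s u := by
    intro s hs
    have hsub : s ⊆ uᶜ := (Finset.mem_powersetCard.1 hs).1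
    exact Finset.disjoint_left.2 fun i hi hiu =>
      (Finset.mem_compl.1 (hsub hi)) hiu
  have hcards : ∀ s : Finset (Fin N), s ∈ Finset.powersetCard (K - l) uᶜ →
      (s ∪ u).card = K := by
    intro s hs
    rw [Finset.card_union_of_disjoint (hdisj s hs), (Finset.mem_powersetCard.1 hs).2, hu]
    omega
  have key : (univ.filter (fun v : KSets N K => u ⊆ v.val)).card
      = (Finset.powersetCard (K - l) uᶜ).card := by
    refine Finset.card_bij' (fun v _ => v.val \ u)
      (fun s hs => (⟨s ∪ u, hcards s hs⟩ : KSets N K)) ?_ ?_ ?_ ?_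
    · intro v hv
      have hsub : u ⊆ v.val := (Finset.mem_filter.1 hv).2
      rw [Finset.mem_powersetCard]
      constructor
      · intro i hi
        exact Finset.mem_compl.2 (Finset.mem_sdiff.1 hi).2
      · rw [Finset.card_sdiff_of_subset hsub, v.2, hu]
    · intro s hs
      refine Finset.mem_filter.2 ⟨mem_univ _, ?_⟩
      exact Finset.subset_union_right
    · intro v hv
      apply Subtype.ext
      show v.val \ u ∪ u = v.val
      exact Finset.sdiff_union_of_subset (Finset.mem_filter.1 hv).2
    · intro s hs
      show (s ∪ u) \ u = s
      ext i
      simp only [Finset.mem_sdiff, Finset.mem_union]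
      constructor
      · rintro ⟨h1 | h1, h2⟩
        · exact h1
        · exact absurd h1 h2
      · intro hi
        exact ⟨Or.inl hi, fun hiu => Finset.disjoint_left.1 (hdisj s hs) hi hiu⟩
  rw [key, Finset.card_powersetCard, Finset.card_compl, hu, Fintype.card_fin]

/-! ### Computations for the nonadaptive genie pmf -/

lemma prb_coord {A B C : Type*} [Fintype A] [Fintype B] [Fintype C] (μ : A × B × C → ℝ)
    (a : A) (b : B) (P : C → Prop) :
    prb μ (fun ω => ω.1 = a ∧ ω.2.1 = b ∧ P ω.2.2) = ∑ c, if P c then μ (a, b, c) else 0 := by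
  unfold prb
  rw [Fintype.sum_prod_type]
  rw [Finset.sum_eq_single a]
  · rw [Fintype.sum_prod_type]
    rw [Finset.sum_eq_single b]
    · refine Finset.sum_congr rfl fun c _ => ?_
      by_cases h : P c
      · simp [h]
      · simp [h]
    · intro b' _ hb'
      refine Finset.sum_eq_zero fun c _ => ?_
      rw [if_neg]
      rintro ⟨_, h2, _⟩
      exact hb' h2
    · intro h; exact absurd (mem_univ b) h
  · intro a' _ ha'
    refine Finset.sum_eq_zero fun x _ => ?_
    rw [if_neg]
    rintro ⟨h1, _⟩
    exact ha' h1
  · intro h; exact absurd (mem_univ a) h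

section GT

variable {N K l T : ℕ} {Y : Type*} [Fintype Y] (ν : ℕ → Y → ℝ) (Xm : Fin N → Fin T → Bool)

lemma sum_y (hν : ∀ k, IsPmf (ν k)) (m : Fin T → ℕ) :
    ∑ y : Fin T → Y, ∏ t, ν (m t) (y t) = 1 := by
  rw [sum_pi_prod]
  exact Finset.prod_eq_one fun t _ => (hν (m t)).2

lemma naGeniePmf_nonneg (hν : ∀ k, IsPmf (ν k)) :
    ∀ ω, 0 ≤ naGeniePmf N K l T Y ν Xm ω := by
  intro ω
  unfold naGeniePmf
  apply mul_nonneg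
  · split_ifs <;> positivity
  · exact Finset.prod_nonneg fun t _ => (hν _).1 _

lemma naGeniePmf_subset {ω} (h : naGeniePmf N K l T Y ν Xm ω ≠ 0) :
    ω.1.val ⊆ ω.2.1.val := by
  by_contra hc
  apply h
  unfold naGeniePmf
  rw [if_neg hc, zero_mul]

lemma prb_UVP (hν : ∀ k, IsPmf (ν k)) (u : KSets N l) (v : KSets N K)
    (P : (Fin T → Y) → Prop) :
    prb (naGeniePmf N K l T Y ν Xm) (fun ω => ω.1 = u ∧ ω.2.1 = v ∧ P ω.2.2)
      = (if u.val ⊆ v.val then (1/(N.choose l : ℝ)) * (1/((N-l).choose (K-l) : ℝ)) else 0)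
        * ∑ y, (if P y then ∏ t, ν ((v.val.filter (fun i => Xm i t = true)).card) (y t)
            else 0) := by
  rw [prb_coord, Finset.mul_sum]
  refine Finset.sum_congr rfl fun y _ => ?_
  by_cases h : P y
  · rw [if_pos h, if_pos h]
    rfl
  · rw [if_neg h, if_neg h, mul_zero]

lemma prb_uv (hν : ∀ k, IsPmf (ν k)) (u : KSets N l) (v : KSets N K) :
    prb (naGeniePmf N K l T Y ν Xm) (fun ω => ω.1 = u ∧ ω.2.1 = v)
      = (if u.val ⊆ v.val then (1/(N.choose l : ℝ)) * (1/((N-l).choose (K-l) : ℝ))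
          else 0) := by
  rw [prb_congr (F := fun ω : KSets N l × KSets N K × (Fin T → Y) =>
      ω.1 = u ∧ ω.2.1 = v ∧ True) (fun ω => by tauto)]
  have h := prb_UVP ν Xm hν u v (fun _ => True)
  rw [h]
  simp only [if_true]
  rw [sum_y ν hν, mul_one]

lemma prb_uvy (hν : ∀ k, IsPmf (ν k)) (u : KSets N l) (v : KSets N K) (y : Fin T → Y) :
    prb (naGeniePmf N K l T Y ν Xm) (fun ω => ω.1 = u ∧ ω.2.1 = v ∧ ω.2.2 = y)
      = naGeniePmf N K l T Y ν Xm (u, v, y) := by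
  have h := prb_UVP ν Xm hν u v (fun c => c = y)
  rw [h]
  unfold naGeniePmf
  dsimp only
  congr 1
  rw [Finset.sum_eq_single y]
  · rw [if_pos rfl]
  · intro c _ hc
    rw [if_neg hc]
  · intro h; exact absurd (mem_univ y) h

lemma prb_uvtc (hν : ∀ k, IsPmf (ν k)) (u : KSets N l) (v : KSets N K) (t : Fin T) (c : Y) :
    prb (naGeniePmf N K l T Y ν Xm) (fun ω => ω.1 = u ∧ ω.2.1 = v ∧ ω.2.2 t = c)
      = (if u.val ⊆ v.val then (1/(N.choose l : ℝ)) * (1/((N-l).choose (K-l) : ℝ)) else 0)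
        * ν ((v.val.filter (fun i => Xm i t = true)).card) c := by
  have h := prb_UVP ν Xm hν u v (fun y => y t = c)
  rw [h]
  congr 1
  exact marg_pi _ (fun s => (hν _).2) t c

lemma prb_u (hν : ∀ k, IsPmf (ν k)) (hKN : K ≤ N) (hlK : l ≤ K) (u : KSets N l) :
    prb (naGeniePmf N K l T Y ν Xm) (fun ω => ω.1 = u) = 1/(N.choose l : ℝ) := by
  have hM : ((N-l).choose (K-l) : ℝ) ≠ 0 := by
    have : 0 < (N-l).choose (K-l) := Nat.choose_pos (by omega)
    positivity
  rw [← prb_comp_sum (naGeniePmf N K l T Y ν Xm) (fun ω => ω.2.1) (fun ω => ω.1 = u)]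
  have hterm : ∀ v : KSets N K,
      prb (naGeniePmf N K l T Y ν Xm) (fun ω => ω.2.1 = v ∧ ω.1 = u)
      = (if u.val ⊆ v.val then (1/(N.choose l : ℝ)) * (1/((N-l).choose (K-l) : ℝ))
          else 0) := by
    intro v
    rw [prb_congr (F := fun ω : KSets N l × KSets N K × (Fin T → Y) =>
      ω.1 = u ∧ ω.2.1 = v) (fun ω => by tauto)]
    exact prb_uv ν Xm hν u v
  rw [Finset.sum_congr rfl fun v _ => hterm v]
  rw [← Finset.sum_filter, Finset.sum_const, nsmul_eq_mul,
    card_supersets K l hKN hlK u.val u.2]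
  have hCNl : ((N.choose l : ℝ)) ≠ 0 := by
    have : 0 < N.choose l := Nat.choose_pos (by omega)
    positivity
  field_simp

lemma naGeniePmf_isPmf (hν : ∀ k, IsPmf (ν k)) (hKN : K ≤ N) (hlK : l ≤ K) :
    IsPmf (naGeniePmf N K l T Y ν Xm) := by
  refine ⟨naGeniePmf_nonneg ν Xm hν, ?_⟩
  have h1 : ∑ ω, naGeniePmf N K l T Y ν Xm ω
      = prb (naGeniePmf N K l T Y ν Xm) (fun _ => True) := by
    unfold prb
    simp
  rw [h1, ← prb_comp_sum (naGeniePmf N K l T Y ν Xm) (fun ω => ω.1) (fun _ => True)]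
  have h2 : ∀ u : KSets N l, prb (naGeniePmf N K l T Y ν Xm) (fun ω => ω.1 = u ∧ True)
      = 1/(N.choose l : ℝ) := by
    intro u
    rw [prb_congr (F := fun ω : KSets N l × KSets N K × (Fin T → Y) => ω.1 = u)
      (fun ω => by tauto)]
    exact prb_u ν Xm hν hKN hlK u
  rw [Finset.sum_congr rfl fun u _ => h2 u, Finset.sum_const, nsmul_eq_mul]
  have hCNl : ((N.choose l : ℕ) : ℝ) ≠ 0 := by
    have : 0 < N.choose l := Nat.choose_pos (by omega)
    positivity
  rw [Finset.card_univ,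
    show Fintype.card (KSets N l) = N.choose l from by
      rw [Fintype.card_finset_len, Fintype.card_fin],
    mul_one_div, div_self hCNl]

lemma ent_V_given_u (hν : ∀ k, IsPmf (ν k)) (hKN : K ≤ N) (hlK : l ≤ K) (u : KSets N l) :
    ent (condPmf (naGeniePmf N K l T Y ν Xm) (fun ω => ω.1 = u)) (fun ω => ω.2.1)
      = Real.logb 2 (((N - l).choose (K - l) : ℝ)) := by
  have hM0 : 0 < (N - l).choose (K - l) := Nat.choose_pos (by omega)
  have hM : (((N - l).choose (K - l) : ℕ) : ℝ) ≠ 0 := by positivity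
  have hCNl : ((N.choose l : ℕ) : ℝ) ≠ 0 := by
    have : 0 < N.choose l := Nat.choose_pos (by omega)
    positivity
  have hdist : ∀ v : KSets N K,
      prb (condPmf (naGeniePmf N K l T Y ν Xm) (fun ω => ω.1 = u)) (fun ω => ω.2.1 = v)
      = if u.val ⊆ v.val then 1/(((N - l).choose (K - l) : ℕ) : ℝ) else 0 := by
    intro v
    rw [prb_condPmf, prb_uv ν Xm hν u v, prb_u ν Xm hν hKN hlK u]
    by_cases h : u.val ⊆ v.val
    · rw [if_pos h, if_pos h]
      field_simp
    · rw [if_neg h, if_neg h, zero_div]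
  unfold ent
  rw [Finset.sum_congr rfl fun v (_ : v ∈ univ) => by rw [hdist v]]
  have hterm : ∀ v : KSets N K,
      (if u.val ⊆ v.val then 1/(((N - l).choose (K - l) : ℕ) : ℝ) else 0)
        * Real.logb 2 (if u.val ⊆ v.val then 1/(((N - l).choose (K - l) : ℕ) : ℝ) else 0)
      = if u.val ⊆ v.val then (1/(((N - l).choose (K - l) : ℕ) : ℝ))
          * (- Real.logb 2 (((N - l).choose (K - l) : ℕ) : ℝ)) else 0 := by
    intro v
    by_cases h : u.val ⊆ v.val
    · simp only [if_pos h, one_div, Real.logb_inv]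
    · simp only [if_neg h, zero_mul]
  rw [Finset.sum_congr rfl fun v (_ : v ∈ univ) => hterm v]
  rw [← Finset.sum_filter, Finset.sum_const, nsmul_eq_mul,
    card_supersets K l hKN hlK u.val u.2]
  field_simp

lemma condEnt_V_U (hν : ∀ k, IsPmf (ν k)) (hKN : K ≤ N) (hlK : l ≤ K) :
    condEnt (naGeniePmf N K l T Y ν Xm) (fun ω => ω.2.1) (fun ω => ω.1)
      = Real.logb 2 (((N - l).choose (K - l) : ℝ)) := by
  unfold condEnt
  beta_reduce
  have hterm : ∀ u : KSets N l,
      prb (naGeniePmf N K l T Y ν Xm) (fun ω => ω.1 = u)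
        * ent (condPmf (naGeniePmf N K l T Y ν Xm) (fun ω => ω.1 = u)) (fun ω => ω.2.1)
      = prb (naGeniePmf N K l T Y ν Xm) (fun ω => ω.1 = u)
        * Real.logb 2 (((N - l).choose (K - l) : ℝ)) :=
    fun u => by rw [ent_V_given_u ν Xm hν hKN hlK u]
  refine Eq.trans (Finset.sum_congr rfl fun u _ => hterm u) ?_
  rw [← Finset.sum_mul]
  have h := prb_fiber_sum (naGeniePmf N K l T Y ν Xm)
    (fun ω : KSets N l × KSets N K × (Fin T → Y) => ω.1) (fun _ => True)
  rw [prb_true (naGeniePmf_isPmf ν Xm hν hKN hlK)] at h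
  have h1 := Eq.trans (Finset.sum_congr rfl fun u _ =>
    prb_congr (μ := naGeniePmf N K l T Y ν Xm)
      (E := fun ω => ω.1 = u)
      (F := fun ω => ω.1 = u ∧ True) (fun ω => by tauto)) h
  rw [h1, one_mul]

lemma fano_side (hν : ∀ k, IsPmf (ν k)) (hKN : K ≤ N) (hlK : l < K)
    (Khat : (Fin T → Y) → KSets N K) :
    condEnt (naGeniePmf N K l T Y ν Xm) (fun ω => ω.2.1) (fun ω => (ω.1, ω.2.2))
      ≤ 1 + prb (naGeniePmf N K l T Y ν Xm) (fun ω => Khat ω.2.2 ≠ ω.2.1)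
          * Real.logb 2 (((N - l).choose (K - l) : ℝ)) := by
  have hpmf := naGeniePmf_isPmf ν Xm hν hKN (le_of_lt hlK)
  have hnn := hpmf.1
  have hM1 : (1:ℝ) ≤ (((N - l).choose (K - l)) : ℝ) := by
    exact_mod_cast Nat.choose_pos (by omega : K - l ≤ N - l)
  have hlogM : 0 ≤ Real.logb 2 (((N - l).choose (K - l)) : ℝ) :=
    Real.logb_nonneg one_lt_two hM1
  unfold condEnt
  beta_reduce
  have key : ∀ p : KSets N l × (Fin T → Y),
      prb (naGeniePmf N K l T Y ν Xm) (fun ω => (ω.1, ω.2.2) = p)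
        * ent (condPmf (naGeniePmf N K l T Y ν Xm) (fun ω => (ω.1, ω.2.2) = p))
            (fun ω => ω.2.1)
      ≤ prb (naGeniePmf N K l T Y ν Xm) (fun ω => (ω.1, ω.2.2) = p)
        + Real.logb 2 (((N - l).choose (K - l)) : ℝ)
          * prb (naGeniePmf N K l T Y ν Xm)
              (fun ω => (ω.1, ω.2.2) = p ∧ Khat ω.2.2 ≠ ω.2.1) := by
    intro p
    by_cases hp : prb (naGeniePmf N K l T Y ν Xm) (fun ω => (ω.1, ω.2.2) = p) = 0
    · rw [hp, zero_mul]
      exact add_nonneg le_rfl (mul_nonneg hlogM (prb_nonneg hnn _))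
    · have hπ : IsPmf (condPmf (naGeniePmf N K l T Y ν Xm) (fun ω => (ω.1, ω.2.2) = p)) :=
        condPmf_isPmf hpmf hp
      have hdistpmf : IsPmf (fun v : KSets N K =>
          prb (condPmf (naGeniePmf N K l T Y ν Xm) (fun ω => (ω.1, ω.2.2) = p))
            (fun ω => ω.2.1 = v)) := by
        constructor
        · intro v
          exact prb_nonneg hπ.1 _
        · have h := prb_comp_sum
            (condPmf (naGeniePmf N K l T Y ν Xm) (fun ω => (ω.1, ω.2.2) = p))
            (fun ω => ω.2.1) (fun _ => True)
          rw [prb_true hπ] at h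
          rw [← h]
          exact Finset.sum_congr rfl fun v _ => prb_congr fun ω => by tauto
      have hsupp : ∀ v : KSets N K,
          prb (condPmf (naGeniePmf N K l T Y ν Xm) (fun ω => (ω.1, ω.2.2) = p))
            (fun ω => ω.2.1 = v) ≠ 0 →
          v ∈ univ.filter (fun v : KSets N K => p.1.val ⊆ v.val) := by
        intro v hv
        rw [prb_condPmf] at hv
        have hnum : prb (naGeniePmf N K l T Y ν Xm)
            (fun ω => (ω.1, ω.2.2) = p ∧ ω.2.1 = v) ≠ 0 := by
          intro h0
          rw [h0, zero_div] at hv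
          exact hv rfl
        obtain ⟨ω, ⟨hpe, hVe⟩, hμω⟩ := exists_of_prb_ne_zero hnum
        have h1 : ω.1 = p.1 := congrArg Prod.fst hpe
        have hsub := naGeniePmf_subset ν Xm hμω
        refine Finset.mem_filter.2 ⟨mem_univ _, ?_⟩
        rw [← h1, ← hVe]
        exact hsub
      have hfano := fano_core _ hdistpmf _ hsupp (Khat p.2)
      rw [card_supersets K l hKN (le_of_lt hlK) p.1.val p.1.2] at hfano
      have hcompl : (1 : ℝ)
          - prb (condPmf (naGeniePmf N K l T Y ν Xm) (fun ω => (ω.1, ω.2.2) = p))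
              (fun ω => ω.2.1 = Khat p.2)
          = prb (condPmf (naGeniePmf N K l T Y ν Xm) (fun ω => (ω.1, ω.2.2) = p))
              (fun ω => ¬ (ω.2.1 = Khat p.2)) := (prb_compl hπ _).symm
      rw [hcompl] at hfano
      have hev : ∀ ω : KSets N l × KSets N K × (Fin T → Y),
          ((ω.1, ω.2.2) = p ∧ ¬(ω.2.1 = Khat p.2))
            ↔ ((ω.1, ω.2.2) = p ∧ Khat ω.2.2 ≠ ω.2.1) := by
        intro ω
        constructor
        · rintro ⟨h1, h2⟩
          refine ⟨h1, ?_⟩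
          have h3 : ω.2.2 = p.2 := congrArg Prod.snd h1
          rw [h3]
          exact fun he => h2 he.symm
        · rintro ⟨h1, h2⟩
          refine ⟨h1, ?_⟩
          have h3 : ω.2.2 = p.2 := congrArg Prod.snd h1
          rw [h3] at h2
          exact fun he => h2 he.symm
      calc prb (naGeniePmf N K l T Y ν Xm) (fun ω => (ω.1, ω.2.2) = p)
            * ent (condPmf (naGeniePmf N K l T Y ν Xm) (fun ω => (ω.1, ω.2.2) = p))
                (fun ω => ω.2.1)
          ≤ prb (naGeniePmf N K l T Y ν Xm) (fun ω => (ω.1, ω.2.2) = p)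
            * (1 + prb (condPmf (naGeniePmf N K l T Y ν Xm) (fun ω => (ω.1, ω.2.2) = p))
                  (fun ω => ¬ (ω.2.1 = Khat p.2))
                * Real.logb 2 (((N - l).choose (K - l)) : ℝ)) := by
            exact mul_le_mul_of_nonneg_left hfano (prb_nonneg hnn _)
        _ = prb (naGeniePmf N K l T Y ν Xm) (fun ω => (ω.1, ω.2.2) = p)
            + Real.logb 2 (((N - l).choose (K - l)) : ℝ)
              * (prb (naGeniePmf N K l T Y ν Xm) (fun ω => (ω.1, ω.2.2) = p)
                * prb (condPmf (naGeniePmf N K l T Y ν Xm) (fun ω => (ω.1, ω.2.2) = p))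
                    (fun ω => ¬ (ω.2.1 = Khat p.2))) := by ring
        _ = prb (naGeniePmf N K l T Y ν Xm) (fun ω => (ω.1, ω.2.2) = p)
            + Real.logb 2 (((N - l).choose (K - l)) : ℝ)
              * prb (naGeniePmf N K l T Y ν Xm)
                  (fun ω => (ω.1, ω.2.2) = p ∧ ¬(ω.2.1 = Khat p.2)) := by
            rw [prb_mul_condPmf hnn]
        _ = prb (naGeniePmf N K l T Y ν Xm) (fun ω => (ω.1, ω.2.2) = p)
            + Real.logb 2 (((N - l).choose (K - l)) : ℝ)
              * prb (naGeniePmf N K l T Y ν Xm)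
                  (fun ω => (ω.1, ω.2.2) = p ∧ Khat ω.2.2 ≠ ω.2.1) := by
            rw [prb_congr hev]
  refine le_trans (Finset.sum_le_sum fun p _ => key p) ?_
  rw [Finset.sum_add_distrib, ← Finset.mul_sum]
  rw [prb_fiber_sum (naGeniePmf N K l T Y ν Xm)
    (fun ω : KSets N l × KSets N K × (Fin T → Y) => (ω.1, ω.2.2))
    (fun ω => Khat ω.2.2 ≠ ω.2.1)]
  have h := prb_fiber_sum (naGeniePmf N K l T Y ν Xm)
    (fun ω : KSets N l × KSets N K × (Fin T → Y) => (ω.1, ω.2.2)) (fun _ => True)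
  rw [prb_true hpmf] at h
  have h1 := Eq.trans (Finset.sum_congr rfl fun p _ =>
    prb_congr (μ := naGeniePmf N K l T Y ν Xm)
      (E := fun ω => (ω.1, ω.2.2) = p)
      (F := fun ω => (ω.1, ω.2.2) = p ∧ True) (fun ω => by tauto)) h
  rw [h1]
  linarith

lemma per_u (hν : ∀ k, IsPmf (ν k)) (u : KSets N l)
    (pr : KSets N l × KSets N K × (Fin T → Y) → ℝ) (hpr : IsPmf pr)
    (hsupp : ∀ ω, pr ω ≠ 0 → ω.1 = u ∧ u.val ⊆ ω.2.1.val)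
    (hcond : ∀ v : KSets N K, prb pr (fun ω => ω.2.1 = v) ≠ 0 → ∀ y : Fin T → Y,
      prb (condPmf pr (fun ω => ω.2.1 = v)) (fun ω => ω.2.2 = y)
        = ∏ t, ν ((v.val.filter (fun i => Xm i t = true)).card) (y t)) :
    ent pr (fun ω => ω.2.1) - condEnt pr (fun ω => ω.2.1) (fun ω => ω.2.2)
      ≤ ∑ t : Fin T, mutInfo pr
          (fun ω => XS (ω.2.1.val \ ω.1.val) (fun i => Xm i t))
          (fun ω => ω.2.2 t) := by
  have hprnn := hpr.1
  have hsubv : ∀ v : KSets N K, prb pr (fun ω => ω.2.1 = v) ≠ 0 → u.val ⊆ v.val := by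
    intro v hv
    obtain ⟨ω, hVe, hprω⟩ := exists_of_prb_ne_zero hv
    have h2 := (hsupp ω hprω).2
    rwa [hVe] at h2
  have hYt : ∀ (t : Fin T) (v : KSets N K), prb pr (fun ω => ω.2.1 = v) ≠ 0 → ∀ c : Y,
      prb (condPmf pr (fun ω => ω.2.1 = v)) (fun ω => ω.2.2 t = c)
        = ν ((v.val.filter (fun i => Xm i t = true)).card) c := by
    intro t v hv c
    have h := prb_comp_sum (condPmf pr (fun ω => ω.2.1 = v))
      (fun ω : KSets N l × KSets N K × (Fin T → Y) => ω.2.2) (fun ω => ω.2.2 t = c)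
    rw [← h]
    have hterm : ∀ y : Fin T → Y,
        prb (condPmf pr (fun ω => ω.2.1 = v)) (fun ω => ω.2.2 = y ∧ ω.2.2 t = c)
        = if y t = c then ∏ s, ν ((v.val.filter (fun i => Xm i s = true)).card) (y s)
            else 0 := by
      intro y
      by_cases hc : y t = c
      · rw [if_pos hc, prb_congr (μ := condPmf pr fun ω => ω.2.1 = v)
          (E := fun ω => ω.2.2 = y ∧ ω.2.2 t = c)
          (F := fun ω => ω.2.2 = y)
          (fun ω => ⟨fun h => h.1, fun h => ⟨h, by rw [h]; exact hc⟩⟩)]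
        exact hcond v hv y
      · rw [if_neg hc, prb_congr (μ := condPmf pr fun ω => ω.2.1 = v)
          (E := fun ω => ω.2.2 = y ∧ ω.2.2 t = c)
          (F := fun _ => False)
          (fun ω => ⟨fun h => hc (by rw [← h.1]; exact h.2), False.elim⟩)]
        exact prb_false
    rw [Finset.sum_congr rfl fun y _ => hterm y]
    exact marg_pi _ (fun s => (hν _).2) t c
  have hVY : ∀ (t : Fin T) (v : KSets N K) (c : Y),
      prb pr (fun ω => ω.2.1 = v ∧ ω.2.2 t = c)
        = prb pr (fun ω => ω.2.1 = v)
          * ν ((v.val.filter (fun i => Xm i t = true)).card) c := by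
    intro t v c
    by_cases hv : prb pr (fun ω => ω.2.1 = v) = 0
    · rw [hv, zero_mul]
      exact prb_eq_zero_of fun ω h => mu_eq_zero_of_prb_eq_zero hprnn hv ω h.1
    · rw [← prb_mul_condPmf hprnn, hYt t v hv c]
  have hentW : ∀ v : KSets N K, prb pr (fun ω => ω.2.1 = v) ≠ 0 →
      ent (condPmf pr (fun ω => ω.2.1 = v)) (fun ω => ω.2.2)
        = ∑ t, entPmf (ν ((v.val.filter (fun i => Xm i t = true)).card)) := by
    intro v hv
    have h1 : ent (condPmf pr (fun ω => ω.2.1 = v)) (fun ω => ω.2.2)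
        = entPmf (fun y : Fin T → Y =>
            ∏ t, ν ((v.val.filter (fun i => Xm i t = true)).card) (y t)) :=
      congrArg entPmf (funext fun y => hcond v hv y)
    rw [h1, entPmf_prod _ (fun t => hν _)]
  have hentYt : ∀ (t : Fin T) (v : KSets N K), prb pr (fun ω => ω.2.1 = v) ≠ 0 →
      ent (condPmf pr (fun ω => ω.2.1 = v)) (fun ω => ω.2.2 t)
        = entPmf (ν ((v.val.filter (fun i => Xm i t = true)).card)) :=
    fun t v hv => congrArg entPmf (funext fun c => hYt t v hv c)
  have cW : condEnt pr (fun ω => ω.2.2) (fun ω => ω.2.1)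
      = ∑ ω, pr ω * ∑ t, entPmf (ν ((ω.2.1.val.filter (fun i => Xm i t = true)).card)) :=
    condEnt_eq_expect hprnn _ _ _ (fun v hv => hentW v hv)
  have cY : ∀ t : Fin T, condEnt pr (fun ω => ω.2.2 t) (fun ω => ω.2.1)
      = ∑ ω, pr ω * entPmf (ν ((ω.2.1.val.filter (fun i => Xm i t = true)).card)) :=
    fun t => condEnt_eq_expect hprnn _ _ _ (fun v hv => hentYt t v hv)
  have hCW : condEnt pr (fun ω => ω.2.2) (fun ω => ω.2.1)
      = ∑ t, condEnt pr (fun ω => ω.2.2 t) (fun ω => ω.2.1) := by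
    rw [cW, Finset.sum_congr rfl fun ω (_ : ω ∈ univ) => Finset.mul_sum _ _ _,
      Finset.sum_comm]
    exact Finset.sum_congr rfl fun t _ => (cY t).symm
  have hD : ∀ t : Fin T,
      condEnt pr (fun ω => ω.2.2 t) (fun ω => XS (ω.2.1.val \ ω.1.val) (fun i => Xm i t))
        = condEnt pr (fun ω => ω.2.2 t) (fun ω => ω.2.1) := by
    intro t
    have hkt : ∀ v : KSets N K, u.val ⊆ v.val →
        (v.val.filter (fun i => Xm i t = true)).card
          = ((v.val \ u.val).filter (fun i => Xm i t = true)).card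
            + (u.val.filter (fun i => Xm i t = true)).card := by
      intro v h
      conv_lhs => rw [← Finset.sdiff_union_of_subset h]
      rw [Finset.filter_union,
        Finset.card_union_of_disjoint (Finset.disjoint_filter_filter Finset.sdiff_disjoint)]
    have hq2 : ∀ (a : Finset (Fin N) × (Fin N → Option Bool)) (c : Y),
        prb pr (fun ω => XS (ω.2.1.val \ ω.1.val) (fun i => Xm i t) = a ∧ ω.2.2 t = c)
          = prb pr (fun ω => XS (ω.2.1.val \ ω.1.val) (fun i => Xm i t) = a)
            * ν ((a.1.filter (fun i => Xm i t = true)).card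
                + (u.val.filter (fun i => Xm i t = true)).card) c := by
      intro a c
      rw [← prb_fiber_sum pr (fun ω : KSets N l × KSets N K × (Fin T → Y) => ω.2.1)
          (fun ω => XS (ω.2.1.val \ ω.1.val) (fun i => Xm i t) = a ∧ ω.2.2 t = c),
        ← prb_fiber_sum pr (fun ω : KSets N l × KSets N K × (Fin T → Y) => ω.2.1)
          (fun ω => XS (ω.2.1.val \ ω.1.val) (fun i => Xm i t) = a),
        Finset.sum_mul]
      refine Finset.sum_congr rfl fun v _ => ?_
      by_cases hg : XS (v.val \ u.val) (fun i => Xm i t) = a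
      · have e1 : prb pr (fun ω => ω.2.1 = v
            ∧ (XS (ω.2.1.val \ ω.1.val) (fun i => Xm i t) = a ∧ ω.2.2 t = c))
            = prb pr (fun ω => ω.2.1 = v ∧ ω.2.2 t = c) := by
          refine prb_congr_ae fun ω hω => ?_
          have h1 := (hsupp ω hω).1
          constructor
          · rintro ⟨hv, _, hc⟩
            exact ⟨hv, hc⟩
          · rintro ⟨hv, hc⟩
            exact ⟨hv, by rw [h1, hv]; exact hg, hc⟩
        have e2 : prb pr (fun ω => ω.2.1 = v
            ∧ XS (ω.2.1.val \ ω.1.val) (fun i => Xm i t) = a)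
            = prb pr (fun ω => ω.2.1 = v) := by
          refine prb_congr_ae fun ω hω => ?_
          have h1 := (hsupp ω hω).1
          constructor
          · rintro ⟨hv, _⟩
            exact hv
          · intro hv
            exact ⟨hv, by rw [h1, hv]; exact hg⟩
        rw [e1, e2, hVY t v c]
        by_cases hv0 : prb pr (fun ω => ω.2.1 = v) = 0
        · rw [hv0, zero_mul, zero_mul]
        · have huv := hsubv v hv0
          have hnat : (v.val.filter (fun i => Xm i t = true)).card
              = (a.1.filter (fun i => Xm i t = true)).card
                + (u.val.filter (fun i => Xm i t = true)).card := by
            rw [hkt v huv, ← hg]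
            rfl
          rw [hnat]
      · have z1 : prb pr (fun ω => ω.2.1 = v
            ∧ (XS (ω.2.1.val \ ω.1.val) (fun i => Xm i t) = a ∧ ω.2.2 t = c)) = 0 := by
          refine prb_eq_zero_of fun ω h => ?_
          by_contra hprω
          exact hg (by rw [← h.1, ← (hsupp ω hprω).1]; exact h.2.1)
        have z2 : prb pr (fun ω => ω.2.1 = v
            ∧ XS (ω.2.1.val \ ω.1.val) (fun i => Xm i t) = a) = 0 := by
          refine prb_eq_zero_of fun ω h => ?_
          by_contra hprω
          exact hg (by rw [← h.1, ← (hsupp ω hprω).1]; exact h.2)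
        rw [z1, z2, zero_mul]
    have hGA : ∀ a : Finset (Fin N) × (Fin N → Option Bool),
        prb pr (fun ω => XS (ω.2.1.val \ ω.1.val) (fun i => Xm i t) = a) ≠ 0 →
        ent (condPmf pr (fun ω => XS (ω.2.1.val \ ω.1.val) (fun i => Xm i t) = a))
            (fun ω => ω.2.2 t)
          = entPmf (ν ((a.1.filter (fun i => Xm i t = true)).card
              + (u.val.filter (fun i => Xm i t = true)).card)) := by
      intro a ha
      refine congrArg entPmf (funext fun c => ?_)
      rw [prb_condPmf, hq2 a c, mul_comm, mul_div_assoc, div_self ha, mul_one]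
    have d1 : condEnt pr (fun ω => ω.2.2 t)
        (fun ω => XS (ω.2.1.val \ ω.1.val) (fun i => Xm i t))
        = ∑ ω, pr ω * entPmf (ν
            ((((XS (ω.2.1.val \ ω.1.val) (fun i => Xm i t)).1).filter
                (fun i => Xm i t = true)).card
              + (u.val.filter (fun i => Xm i t = true)).card)) :=
      condEnt_eq_expect hprnn _ _ _ hGA
    rw [d1, cY t]
    refine Finset.sum_congr rfl fun ω _ => ?_
    by_cases hω : pr ω = 0
    · rw [hω, zero_mul, zero_mul]
    · have h1 := hsupp ω hω
      have hnat : ((XS (ω.2.1.val \ ω.1.val) (fun i => Xm i t)).1.filter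
            (fun i => Xm i t = true)).card
            + (u.val.filter (fun i => Xm i t = true)).card
          = (ω.2.1.val.filter (fun i => Xm i t = true)).card := by
        rw [show (XS (ω.2.1.val \ ω.1.val) (fun i => Xm i t)).1 = ω.2.1.val \ ω.1.val
            from rfl, h1.1, ← hkt ω.2.1 h1.2]
      rw [hnat]
  have hE : ∀ t : Fin T, mutInfo pr
      (fun ω => XS (ω.2.1.val \ ω.1.val) (fun i => Xm i t)) (fun ω => ω.2.2 t)
      = ent pr (fun ω => ω.2.2 t)
        - condEnt pr (fun ω => ω.2.2 t)
            (fun ω => XS (ω.2.1.val \ ω.1.val) (fun i => Xm i t)) := by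
    intro t
    unfold mutInfo
    have hch := chain_rule hprnn (fun ω : KSets N l × KSets N K × (Fin T → Y) => ω.2.2 t)
      (fun ω => XS (ω.2.1.val \ ω.1.val) (fun i => Xm i t))
    have hsw := ent_pair_comm pr
      (fun ω : KSets N l × KSets N K × (Fin T → Y) =>
        XS (ω.2.1.val \ ω.1.val) (fun i => Xm i t))
      (fun ω => ω.2.2 t)
    rw [hsw, hch]
    ring
  have hA : ent pr (fun ω => ω.2.2) ≤ ∑ t, ent pr (fun ω => ω.2.2 t) := by
    have hpW : IsPmf (fun y : Fin T → Y => prb pr (fun ω => ω.2.2 = y)) := by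
      constructor
      · intro y
        exact prb_nonneg hprnn _
      · have h := prb_comp_sum pr
          (fun ω : KSets N l × KSets N K × (Fin T → Y) => ω.2.2) (fun _ => True)
        rw [prb_true hpr] at h
        rw [← h]
        exact Finset.sum_congr rfl fun y _ => prb_congr fun ω => by tauto
    have hmarg1 : ∀ t : Fin T, ∑ c, prb pr (fun ω => ω.2.2 t = c) = 1 := by
      intro t
      have h := prb_comp_sum pr
        (fun ω : KSets N l × KSets N K × (Fin T → Y) => ω.2.2 t) (fun _ => True)
      rw [prb_true hpr] at h
      rw [← h]
      exact Finset.sum_congr rfl fun c _ => prb_congr fun ω => by tauto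
    have hq0 : ∀ y : Fin T → Y, 0 ≤ ∏ t, prb pr (fun ω => ω.2.2 t = y t) :=
      fun y => Finset.prod_nonneg fun t _ => prb_nonneg hprnn _
    have hq1 : ∑ y : Fin T → Y, ∏ t, prb pr (fun ω => ω.2.2 t = y t) ≤ 1 := by
      rw [sum_pi_prod (fun t c => prb pr (fun ω => ω.2.2 t = c))]
      rw [Finset.prod_congr rfl fun t _ => hmarg1 t, Finset.prod_const_one]
    have hfac : ∀ (y : Fin T → Y) (t : Fin T),
        prb pr (fun ω => ω.2.2 = y) ≤ prb pr (fun ω => ω.2.2 t = y t) :=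
      fun y t => prb_mono hprnn fun ω h => by rw [h]
    have hpq : ∀ y : Fin T → Y, prb pr (fun ω => ω.2.2 = y) ≠ 0 →
        (∏ t, prb pr (fun ω => ω.2.2 t = y t)) ≠ 0 := by
      intro y hy
      have hpos : 0 < prb pr (fun ω => ω.2.2 = y) :=
        lt_of_le_of_ne (prb_nonneg hprnn _) (Ne.symm hy)
      exact (Finset.prod_pos fun t _ => lt_of_lt_of_le hpos (hfac y t)).ne'
    have hgibbs := gibbs hpW hq0 hq1 hpq
    refine le_trans hgibbs ?_
    have hWc : ∀ (y : Fin T → Y) (c : Y) (t : Fin T),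
        prb pr (fun ω => ω.2.2 = y ∧ ω.2.2 t = c)
          = if y t = c then prb pr (fun ω => ω.2.2 = y) else 0 := by
      intro y c t
      by_cases hc : y t = c
      · rw [if_pos hc]
        exact prb_congr fun ω => ⟨fun h => h.1, fun h => ⟨h, by rw [h]; exact hc⟩⟩
      · rw [if_neg hc, prb_congr (μ := pr)
          (E := fun ω => ω.2.2 = y ∧ ω.2.2 t = c)
          (F := fun _ => False)
          (fun ω => ⟨fun h => hc (by rw [← h.1]; exact h.2), False.elim⟩)]
        exact prb_false
    have hmarg2 : ∀ (t : Fin T) (c : Y),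
        ∑ y : Fin T → Y, (if y t = c then prb pr (fun ω => ω.2.2 = y) else 0)
          = prb pr (fun ω => ω.2.2 t = c) := by
      intro t c
      have h := prb_comp_sum pr
        (fun ω : KSets N l × KSets N K × (Fin T → Y) => ω.2.2) (fun ω => ω.2.2 t = c)
      rw [← h]
      exact Finset.sum_congr rfl fun y _ => (hWc y c t).symm
    have hstep : ∀ y : Fin T → Y,
        prb pr (fun ω => ω.2.2 = y)
            * Real.logb 2 (∏ t, prb pr (fun ω => ω.2.2 t = y t))
          = ∑ t, prb pr (fun ω => ω.2.2 = y)
              * Real.logb 2 (prb pr (fun ω => ω.2.2 t = y t)) := by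
      intro y
      by_cases hy : prb pr (fun ω => ω.2.2 = y) = 0
      · simp [hy]
      · rw [Real.logb_prod _ _ (fun t _ =>
          (lt_of_lt_of_le (lt_of_le_of_ne (prb_nonneg hprnn _) (Ne.symm hy))
            (hfac y t)).ne'), Finset.mul_sum]
    rw [Finset.sum_congr rfl fun y (_ : y ∈ univ) => hstep y, Finset.sum_comm,
      ← Finset.sum_neg_distrib]
    refine Finset.sum_le_sum fun t _ => ?_
    have hinner : ∑ y : Fin T → Y,
        prb pr (fun ω => ω.2.2 = y) * Real.logb 2 (prb pr (fun ω => ω.2.2 t = y t))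
        = ∑ c, prb pr (fun ω => ω.2.2 t = c)
            * Real.logb 2 (prb pr (fun ω => ω.2.2 t = c)) := by
      have hy2 : ∀ y : Fin T → Y,
          prb pr (fun ω => ω.2.2 = y) * Real.logb 2 (prb pr (fun ω => ω.2.2 t = y t))
          = ∑ c, (if y t = c then prb pr (fun ω => ω.2.2 = y) else 0)
              * Real.logb 2 (prb pr (fun ω => ω.2.2 t = c)) := by
        intro y
        rw [Finset.sum_eq_single (y t)]
        · rw [if_pos rfl]
        · intro c _ hc
          rw [if_neg (fun h => hc h.symm), zero_mul]
        · intro h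
          exact absurd (Finset.mem_univ (y t)) h
      rw [Finset.sum_congr rfl fun y _ => hy2 y, Finset.sum_comm]
      refine Finset.sum_congr rfl fun c _ => ?_
      rw [← Finset.sum_mul, hmarg2 t c]
    rw [hinner]
    exact le_of_eq (by rfl)
  have c1 := chain_rule hprnn
    (fun ω : KSets N l × KSets N K × (Fin T → Y) => ω.2.1) (fun ω => ω.2.2)
  have c2 := chain_rule hprnn
    (fun ω : KSets N l × KSets N K × (Fin T → Y) => ω.2.2) (fun ω => ω.2.1)
  have c3 := ent_pair_comm pr
    (fun ω : KSets N l × KSets N K × (Fin T → Y) => ω.2.1) (fun ω => ω.2.2)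
  have hmut : ∑ t : Fin T, mutInfo pr
      (fun ω => XS (ω.2.1.val \ ω.1.val) (fun i => Xm i t)) (fun ω => ω.2.2 t)
      = (∑ t, ent pr (fun ω => ω.2.2 t))
        - ∑ t, condEnt pr (fun ω => ω.2.2 t) (fun ω => ω.2.1) := by
    rw [Finset.sum_congr rfl fun t (_ : t ∈ univ) => by rw [hE t, hD t],
      Finset.sum_sub_distrib]
  linarith [c1, c2, c3, hCW, hA, hmut]

end GT

end GTLib

/-- In nonadaptive group testing (model where only defects matter) with a
fixed testing matrix `X`, the genie construction of `𝓛` and `𝒦`, an estimator `K̂`, and error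
probability `ε = P(K̂ ≠ 𝒦)`,
`(1 − ε) · log₂ C(N−ℓ, K−ℓ) ≤ 1 + Σ_{t=1}^T I( X_{𝒦∖𝓛,t} : Y_t ∣ X_{𝓛,t} )`. -/
theorem fano_bound_nonadaptive_genie
    (N K l T : ℕ) (hlK : l < K) (hKN : K ≤ N) (Y : Type*) [Fintype Y]
    (ν : ℕ → Y → ℝ) (hν : ∀ k, IsPmf (ν k))
    (X : Fin N → Fin T → Bool)
    (Khat : (Fin T → Y) → KSets N K)
    (eps : ℝ)
    (heps : eps = prb (naGeniePmf N K l T Y ν X) (fun ω => Khat ω.2.2 ≠ ω.2.1)) :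
    (1 - eps) * Real.logb 2 (((N - l).choose (K - l) : ℝ))
      ≤ 1 + ∑ t : Fin T,
          condMutInfo (naGeniePmf N K l T Y ν X)
            (fun ω => XS (ω.2.1.val \ ω.1.val) (fun i => X i t))
            (fun ω => ω.2.2 t)
            (fun ω => XS ω.1.val (fun i => X i t)) := by
  classical
  have hlKle : l ≤ K := le_of_lt hlK
  have hpmf := naGeniePmf_isPmf ν X hν hKN hlKle
  have hnn := hpmf.1
  have hc0 : (1/(N.choose l : ℝ)) * (1/((N-l).choose (K-l) : ℝ)) ≠ 0 := by
    have h1 : 0 < N.choose l := Nat.choose_pos (by omega)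
    have h2 : 0 < (N-l).choose (K-l) := Nat.choose_pos (by omega)
    positivity
  have hmain : ∀ u : KSets N l, prb (naGeniePmf N K l T Y ν X) (fun ω => ω.1 = u) ≠ 0 →
      ent (condPmf (naGeniePmf N K l T Y ν X) (fun ω => ω.1 = u)) (fun ω => ω.2.1)
        - condEnt (condPmf (naGeniePmf N K l T Y ν X) (fun ω => ω.1 = u))
            (fun ω => ω.2.1) (fun ω => ω.2.2)
      ≤ ∑ t : Fin T, mutInfo (condPmf (naGeniePmf N K l T Y ν X) (fun ω => ω.1 = u))
          (fun ω => XS (ω.2.1.val \ ω.1.val) (fun i => X i t))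
          (fun ω => ω.2.2 t) := by
    intro u hu
    refine per_u ν X hν u _ (condPmf_isPmf hpmf hu) ?_ ?_
    · intro ω hω
      obtain ⟨hE, hμω⟩ := condPmf_support hω
      refine ⟨hE, ?_⟩
      have h2 := naGeniePmf_subset ν X hμω
      rwa [hE] at h2
    · intro v hv y
      rw [prb_condPmf] at hv
      have hnum : prb (naGeniePmf N K l T Y ν X) (fun ω => ω.1 = u ∧ ω.2.1 = v) ≠ 0 := by
        intro h0
        rw [h0, zero_div] at hv
        exact hv rfl
      rw [prb_uv ν X hν u v] at hnum
      have huv : u.val ⊆ v.val := by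
        by_contra hc
        rw [if_neg hc] at hnum
        exact hnum rfl
      rw [condPmf_condPmf hnn, prb_condPmf,
        prb_congr (μ := naGeniePmf N K l T Y ν X)
          (E := fun ω => (ω.1 = u ∧ ω.2.1 = v) ∧ ω.2.2 = y)
          (F := fun ω => ω.1 = u ∧ ω.2.1 = v ∧ ω.2.2 = y) (fun ω => by tauto),
        prb_uvy ν X hν u v y, prb_uv ν X hν u v, if_pos huv]
      have hfor : naGeniePmf N K l T Y ν X (u, v, y)
          = ((1/(N.choose l : ℝ)) * (1/((N-l).choose (K-l) : ℝ)))
            * ∏ t, ν ((v.val.filter (fun i => X i t = true)).card) (y t) := by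
        unfold naGeniePmf
        dsimp only
        rw [if_pos huv]
      rw [hfor, mul_comm, mul_div_assoc, div_self hc0, mul_one]
  have htower := condEnt_pair hnn
    (fun ω : KSets N l × KSets N K × (Fin T → Y) => ω.2.1)
    (fun ω => ω.1) (fun ω => ω.2.2)
  have hrelabel := fun t : Fin T => condMutInfo_comp_inj (naGeniePmf N K l T Y ν X)
    (fun ω => XS (ω.2.1.val \ ω.1.val) (fun i => X i t))
    (fun ω => ω.2.2 t)
    (fun ω : KSets N l × KSets N K × (Fin T → Y) => ω.1)
    (fun u : KSets N l => XS u.val (fun i => X i t))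
    (fun a b h => Subtype.ext (show a.val = b.val from congrArg Prod.fst h))
  have hdiff : condEnt (naGeniePmf N K l T Y ν X) (fun ω => ω.2.1) (fun ω => ω.1)
      - condEnt (naGeniePmf N K l T Y ν X) (fun ω => ω.2.1) (fun ω => (ω.1, ω.2.2))
      ≤ ∑ t : Fin T, condMutInfo (naGeniePmf N K l T Y ν X)
          (fun ω => XS (ω.2.1.val \ ω.1.val) (fun i => X i t))
          (fun ω => ω.2.2 t)
          (fun ω => XS ω.1.val (fun i => X i t)) := by
    rw [htower, condEnt_def' (naGeniePmf N K l T Y ν X)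
        (fun ω => ω.2.1) (fun ω : KSets N l × KSets N K × (Fin T → Y) => ω.1),
      ← Finset.sum_sub_distrib,
      Finset.sum_congr rfl fun t (_ : t ∈ (univ : Finset (Fin T))) => hrelabel t,
      Finset.sum_comm]
    refine Finset.sum_le_sum fun u _ => ?_
    rw [← mul_sub, ← Finset.mul_sum]
    by_cases hu : prb (naGeniePmf N K l T Y ν X) (fun ω => ω.1 = u) = 0
    · rw [hu, zero_mul, zero_mul]
    · exact mul_le_mul_of_nonneg_left (hmain u hu) (prb_nonneg hnn _)
  have hfano := fano_side ν X hν hKN hlK Khat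
  have hVU := condEnt_V_U ν X hν hKN hlKle
  rw [heps]
  nlinarith [hdiff, hfano, hVU]
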